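/- Let ω ∈ ℝ^ℓ belong to the Diophantine class D^aff(ν,τ), i.e. |ω·k|^{-1} ≤ ν|k|^τ for every k ∈ ℤ^ℓ \ {0}, and let η: ℝ^ℓ → ℂ be given by an absolutely convergent Fourier series η(θ) = Σ_{k∈ℤ^ℓ} η̂_k e^{2πi k·θ} with η̂_0 = 0 and |η̂_k| ≤ M e^{−δ|k|} for some M > 0, δ > 0. Then the series φ(θ) = Σ_{k≠0} η̂_k (2πi k·ω)^{−1} e^{2πi k·θ} converges absolutely and uniformly, defines a C¹ ℤ^ℓ-periodic function, and ∂_ω φ(θ) := Σ_{j=1}^ℓ ω_j ∂φ/∂θ_j (θ) = η(θ) for every θ ∈ ℝ^ℓ. -/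

import Mathlib

/-- The `k`-th term of the formal solution of the small divisor equation
`∂_ω φ = η` for flows, namely `η̂_k (2πi k·ω)⁻¹ e^{2πi k·θ}`. -/
noncomputable def phiFlowTerm (ℓ : ℕ) (ηhat : (Fin ℓ → ℤ) → ℂ) (ω : Fin ℓ → ℝ)
    (k : Fin ℓ → ℤ) (θ : Fin ℓ → ℝ) : ℂ :=
  ηhat k *
    (((2 * Real.pi : ℝ) : ℂ) * Complex.I * ((∑ i, (k i : ℝ) * ω i : ℝ) : ℂ))⁻¹ *
    Complex.exp (((2 * Real.pi : ℝ) : ℂ) * Complex.I *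
      ((∑ i, (k i : ℝ) * θ i : ℝ) : ℂ))

lemma auxSummableExpInt (c : ℝ) (hc : 0 < c) :
    Summable (fun n : ℤ => Real.exp (-c * |(n : ℝ)|)) := by
  have hgeom : Summable (fun n : ℕ => Real.exp (-c) ^ n) :=
    summable_geometric_of_lt_one (Real.exp_pos _).le
      (Real.exp_lt_one_iff.mpr (by linarith))
  apply Summable.of_nat_of_neg
  · refine hgeom.congr fun n => ?_
    rw [← Real.exp_nat_mul]
    congr 1
    push_cast
    rw [abs_of_nonneg (by positivity : (0:ℝ) ≤ (n:ℝ))]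
    ring
  · refine hgeom.congr fun n => ?_
    rw [← Real.exp_nat_mul]
    congr 1
    push_cast
    rw [abs_neg, abs_of_nonneg (by positivity : (0:ℝ) ≤ (n:ℝ))]
    ring

lemma auxSummableExpPi : ∀ (ℓ : ℕ) (c : ℝ), 0 < c →
    Summable (fun k : Fin ℓ → ℤ => Real.exp (-c * ∑ i, |(k i : ℝ)|)) := by
  intro ℓ
  induction ℓ with
  | zero =>
    intro c _
    haveI : Finite (Fin 0 → ℤ) := Finite.of_subsingleton
    exact Summable.of_finite
  | succ n ih =>
    intro c hc
    rw [← (Fin.consEquiv fun _ => ℤ).summable_iff]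
    have : ((fun k : Fin (n+1) → ℤ => Real.exp (-c * ∑ i, |(k i : ℝ)|)) ∘
        (Fin.consEquiv fun _ => ℤ)) =
        fun p : ℤ × (Fin n → ℤ) =>
          Real.exp (-c * |(p.1 : ℝ)|) * Real.exp (-c * ∑ i, |(p.2 i : ℝ)|) := by
      funext p
      rw [Function.comp_apply, ← Real.exp_add]
      congr 1
      simp [Fin.consEquiv, Fin.sum_univ_succ]
      ring
    rw [this]
    exact (auxSummableExpInt c hc).mul_of_nonneg (ih c hc)
      (fun _ => (Real.exp_pos _).le) (fun _ => (Real.exp_pos _).le)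

lemma auxRpowLeExp (s c : ℝ) (hc : 0 < c) :
    ∃ C : ℝ, 0 < C ∧ ∀ x : ℝ, 1 ≤ x → x ^ s ≤ C * Real.exp (c * x) := by
  set n := ⌈s⌉₊ with hn
  refine ⟨(n.factorial : ℝ) * (c⁻¹) ^ n, by positivity, fun x hx => ?_⟩
  have hx0 : 0 < x := lt_of_lt_of_le one_pos hx
  have h1 : x ^ s ≤ x ^ (n : ℝ) := Real.rpow_le_rpow_of_exponent_le hx (Nat.le_ceil s)
  rw [Real.rpow_natCast] at h1
  have h2 : (c * x) ^ n / n.factorial ≤ Real.exp (c * x) := by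
    calc (c * x) ^ n / n.factorial
        ≤ ∑ i ∈ Finset.range (n + 1), (c * x) ^ i / i.factorial :=
          Finset.single_le_sum (f := fun i => (c * x) ^ i / i.factorial)
            (fun i _ => by positivity) (Finset.self_mem_range_succ n)
      _ ≤ Real.exp (c * x) := Real.sum_le_exp_of_nonneg (by positivity) _
  have h3 : (c * x) ^ n ≤ n.factorial * Real.exp (c * x) := by
    rw [div_le_iff₀ (by positivity)] at h2
    linarith [h2]
  calc x ^ s ≤ x ^ n := h1
    _ = c⁻¹ ^ n * (c * x) ^ n := by
        rw [mul_pow, ← mul_assoc, ← mul_pow, inv_mul_cancel₀ hc.ne', one_pow, one_mul]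
    _ ≤ c⁻¹ ^ n * (n.factorial * Real.exp (c * x)) :=
        mul_le_mul_of_nonneg_left h3 (by positivity)
    _ = (n.factorial : ℝ) * c⁻¹ ^ n * Real.exp (c * x) := by ring

lemma auxOneLeSum {ℓ : ℕ} {k : Fin ℓ → ℤ} (hk : k ≠ 0) : 1 ≤ ∑ i, |(k i : ℝ)| := by
  obtain ⟨i, hi⟩ := Function.ne_iff.mp hk
  calc (1 : ℝ) ≤ |(k i : ℝ)| := by
        rw [← Int.cast_abs]
        exact_mod_cast Int.one_le_abs hi
    _ ≤ ∑ j, |(k j : ℝ)| :=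
        Finset.single_le_sum (f := fun j => |(k j : ℝ)|) (fun j _ => abs_nonneg _) (Finset.mem_univ i)

lemma auxSummableMaster (ℓ : ℕ) (s c : ℝ) (hc : 0 < c) :
    Summable (fun k : Fin ℓ → ℤ =>
      if k = 0 then 0 else
        (∑ i, |(k i : ℝ)|) ^ s * Real.exp (-c * ∑ i, |(k i : ℝ)|)) := by
  obtain ⟨C, hC, hCle⟩ := auxRpowLeExp s (c / 2) (by linarith)
  refine Summable.of_nonneg_of_le ?_ ?_
    ((auxSummableExpPi ℓ (c / 2) (by linarith)).mul_left C)
  · intro k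
    by_cases hk : k = 0
    · simp [hk]
    · simp only [if_neg hk]
      have h1 : (1 : ℝ) ≤ ∑ i, |(k i : ℝ)| := auxOneLeSum hk
      positivity
  · intro k
    by_cases hk : k = 0
    · simp only [if_pos hk]
      positivity
    · simp only [if_neg hk]
      set K := ∑ i, |(k i : ℝ)| with hK
      have hK1 : (1 : ℝ) ≤ K := auxOneLeSum hk
      calc K ^ s * Real.exp (-c * K)
          ≤ C * Real.exp (c / 2 * K) * Real.exp (-c * K) :=
            mul_le_mul_of_nonneg_right (hCle K hK1) (Real.exp_pos _).le
        _ = C * Real.exp (-(c / 2) * K) := by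
            rw [mul_assoc, ← Real.exp_add]
            congr 2
            ring

noncomputable def aA : ℂ := ((2 * Real.pi : ℝ) : ℂ) * Complex.I

def dotP {ℓ : ℕ} (k : Fin ℓ → ℤ) (x : Fin ℓ → ℝ) : ℝ := ∑ i, (k i : ℝ) * x i

def KKs {ℓ : ℕ} (k : Fin ℓ → ℤ) : ℝ := ∑ i, |(k i : ℝ)|

noncomputable def LL {ℓ : ℕ} (k : Fin ℓ → ℤ) : (Fin ℓ → ℝ) →L[ℝ] ℂ :=
  ∑ i, (k i : ℝ) • (Complex.ofRealCLM.comp (ContinuousLinearMap.proj i))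

lemma LL_apply {ℓ : ℕ} (k : Fin ℓ → ℤ) (x : Fin ℓ → ℝ) :
    LL k x = ((dotP k x : ℝ) : ℂ) := by
  simp [LL, dotP, ContinuousLinearMap.sum_apply, Complex.real_smul]

lemma aA_ne : aA ≠ 0 := by
  apply mul_ne_zero _ Complex.I_ne_zero
  simp [aA, Real.pi_ne_zero]

lemma norm_aA : ‖aA‖ = 2 * Real.pi := by
  rw [aA, norm_mul, Complex.norm_I, mul_one, Complex.norm_real, Real.norm_eq_abs,
    abs_of_pos (by positivity)]

lemma abs_exp_aA (r : ℝ) : ‖Complex.exp (aA * (r : ℂ))‖ = 1 := by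
  rw [Complex.norm_exp]
  convert Real.exp_zero using 2
  simp [aA, Complex.mul_re, Complex.mul_im]

lemma exp_aA_int (n : ℤ) : Complex.exp (aA * ((n : ℝ) : ℂ)) = 1 := by
  have h : aA * ((n : ℝ) : ℂ) = (n : ℂ) * (2 * (Real.pi : ℂ) * Complex.I) := by
    unfold aA; push_cast; ring
  rw [h, Complex.exp_int_mul_two_pi_mul_I]

lemma abs_aA_mul (r : ℝ) : ‖aA * (r : ℂ)‖ = 2 * Real.pi * |r| := by
  rw [norm_mul, show ‖aA‖ = 2 * Real.pi from norm_aA, Complex.norm_real, Real.norm_eq_abs]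

lemma norm_LL_le {ℓ : ℕ} (k : Fin ℓ → ℤ) : ‖LL k‖ ≤ KKs k := by
  apply ContinuousLinearMap.opNorm_le_bound _ (Finset.sum_nonneg fun i _ => abs_nonneg _)
  intro x
  rw [LL_apply, Complex.norm_real, Real.norm_eq_abs]
  show |∑ i, (k i : ℝ) * x i| ≤ (∑ i, |(k i : ℝ)|) * ‖x‖
  calc |∑ i, (k i : ℝ) * x i| ≤ ∑ i, |(k i : ℝ) * x i| := Finset.abs_sum_le_sum_abs _ _
    _ ≤ ∑ i, |(k i : ℝ)| * ‖x‖ := by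
        refine Finset.sum_le_sum fun i _ => ?_
        rw [abs_mul]
        exact mul_le_mul_of_nonneg_left
          ((Real.norm_eq_abs (x i)) ▸ norm_le_pi_norm x i) (abs_nonneg _)
    _ = (∑ i, |(k i : ℝ)|) * ‖x‖ := by rw [Finset.sum_mul]

lemma hasFDerivAt_term {ℓ : ℕ} (c : ℂ) (k : Fin ℓ → ℤ) (θ : Fin ℓ → ℝ) :
    HasFDerivAt (fun θ : Fin ℓ → ℝ => c * Complex.exp (aA * ((dotP k θ : ℝ) : ℂ)))
      ((c * Complex.exp (aA * ((dotP k θ : ℝ) : ℂ)) * aA) • LL k) θ := by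
  have h0 : HasFDerivAt (fun θ : Fin ℓ → ℝ => aA * ((dotP k θ : ℝ) : ℂ)) (aA • LL k) θ := by
    have := (aA • LL k).hasFDerivAt (x := θ)
    convert this using 1
    funext y
    rw [ContinuousLinearMap.smul_apply, LL_apply, smul_eq_mul]
  have h1 := h0.cexp
  have h2 := h1.const_mul c
  have e : (c * Complex.exp (aA * ((dotP k θ : ℝ) : ℂ)) * aA) • LL k =
      c • Complex.exp (aA * ((dotP k θ : ℝ) : ℂ)) • aA • LL k := by
    rw [smul_smul, smul_smul, mul_assoc]
  rw [e]
  exact h2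

lemma continuous_term {ℓ : ℕ} (c : ℂ) (k : Fin ℓ → ℤ) :
    Continuous (fun θ : Fin ℓ → ℝ => c * Complex.exp (aA * ((dotP k θ : ℝ) : ℂ))) := by
  apply continuous_const.mul
  apply Complex.continuous_exp.comp
  apply continuous_const.mul
  apply Complex.continuous_ofReal.comp
  exact continuous_finset_sum _ fun i _ => continuous_const.mul (continuous_apply i)

lemma phiFlowTerm_eq (ℓ : ℕ) (ηhat : (Fin ℓ → ℤ) → ℂ) (ω : Fin ℓ → ℝ)
    (k : Fin ℓ → ℤ) (θ : Fin ℓ → ℝ) :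
    phiFlowTerm ℓ ηhat ω k θ =
      ηhat k * (aA * ((dotP k ω : ℝ) : ℂ))⁻¹ *
        Complex.exp (aA * ((dotP k θ : ℝ) : ℂ)) := rfl

lemma term_periodic (ℓ : ℕ) (ηhat : (Fin ℓ → ℤ) → ℂ) (ω : Fin ℓ → ℝ)
    (k : Fin ℓ → ℤ) (θ : Fin ℓ → ℝ) (e : Fin ℓ → ℤ) :
    phiFlowTerm ℓ ηhat ω k (θ + fun i => (e i : ℝ)) = phiFlowTerm ℓ ηhat ω k θ := by
  rw [phiFlowTerm_eq, phiFlowTerm_eq]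
  have h : dotP k (θ + fun i => (e i : ℝ)) = dotP k θ + ((∑ i, k i * e i : ℤ) : ℝ) := by
    simp only [dotP, Pi.add_apply, mul_add, Finset.sum_add_distrib]
    push_cast
    ring
  rw [h, Complex.ofReal_add, mul_add, Complex.exp_add, exp_aA_int, mul_one]

/-- For a frequency `ω` in the affine Diophantine class `D^aff(ν,τ)`
(`|ω·k| ≥ (ν|k|^τ)⁻¹` for all nonzero `k ∈ ℤ^ℓ`) and a function `η` given by an
absolutely convergent Fourier series with `η̂_0 = 0` and exponentially decaying
coefficients, the series `φ(θ) = Σ_{k≠0} η̂_k (2πi k·ω)⁻¹ e^{2πi k·θ}` converges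
absolutely and uniformly, defines a `C¹` `ℤ^ℓ`-periodic function, and solves the
small divisor equation `∂_ω φ = η`, where `∂_ω φ(θ) = Dφ(θ)[ω]`.  (Since `η̂_0 = 0`,
the `k = 0` term vanishes and the sum may be taken over all of `ℤ^ℓ`.) -/
theorem stmt3 (ℓ : ℕ) (ν τ M δ : ℝ) (hν : 0 < ν) (hM : 0 < M) (hδ : 0 < δ)
    (ω : Fin ℓ → ℝ)
    (hdio : ∀ k : Fin ℓ → ℤ, k ≠ 0 →
      (ν * (∑ i, |(k i : ℝ)|) ^ τ)⁻¹ ≤ |(∑ i, (k i : ℝ) * ω i)|)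
    (ηhat : (Fin ℓ → ℤ) → ℂ) (hη0 : ηhat 0 = 0)
    (hdecay : ∀ k : Fin ℓ → ℤ,
      ‖ηhat k‖ ≤ M * Real.exp (-δ * (∑ i, |(k i : ℝ)|)))
    (η : (Fin ℓ → ℝ) → ℂ)
    (hηsum : ∀ θ : Fin ℓ → ℝ, HasSum (fun k : Fin ℓ → ℤ =>
      ηhat k * Complex.exp (((2 * Real.pi : ℝ) : ℂ) * Complex.I *
        ((∑ i, (k i : ℝ) * θ i : ℝ) : ℂ))) (η θ)) :
    ∃ φ : (Fin ℓ → ℝ) → ℂ,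
      (∀ θ, Summable (fun k : Fin ℓ → ℤ => ‖phiFlowTerm ℓ ηhat ω k θ‖)) ∧
      (∀ θ, HasSum (fun k : Fin ℓ → ℤ => phiFlowTerm ℓ ηhat ω k θ) (φ θ)) ∧
      TendstoUniformly
        (fun (s : Finset (Fin ℓ → ℤ)) (θ : Fin ℓ → ℝ) =>
          ∑ k ∈ s, phiFlowTerm ℓ ηhat ω k θ)
        φ Filter.atTop ∧
      ContDiff ℝ 1 φ ∧
      (∀ (θ : Fin ℓ → ℝ) (e : Fin ℓ → ℤ), φ (θ + fun i => (e i : ℝ)) = φ θ) ∧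
      (∀ θ, fderiv ℝ φ θ ω = η θ) := by
  classical
  have hπ : (0 : ℝ) < 2 * Real.pi := by positivity
  set f : (Fin ℓ → ℤ) → (Fin ℓ → ℝ) → ℂ := phiFlowTerm ℓ ηhat ω with hfdef
  -- basic positivity facts
  have hKpos : ∀ k : Fin ℓ → ℤ, k ≠ 0 → (0 : ℝ) < KKs k :=
    fun k hk => lt_of_lt_of_le one_pos (auxOneLeSum hk)
  have hdle : ∀ k : Fin ℓ → ℤ, k ≠ 0 →
      |dotP k ω|⁻¹ ≤ ν * KKs k ^ τ ∧ dotP k ω ≠ 0 := by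
    intro k hk
    have h1 : 0 < ν * KKs k ^ τ := mul_pos hν (Real.rpow_pos_of_pos (hKpos k hk) τ)
    have h2 : (ν * KKs k ^ τ)⁻¹ ≤ |dotP k ω| := hdio k hk
    have h3 : 0 < |dotP k ω| := lt_of_lt_of_le (inv_pos.mpr h1) h2
    refine ⟨?_, abs_pos.mp h3⟩
    calc |dotP k ω|⁻¹ ≤ ((ν * KKs k ^ τ)⁻¹)⁻¹ := inv_anti₀ (inv_pos.mpr h1) h2
      _ = ν * KKs k ^ τ := inv_inv _
  -- norm of the terms
  have hnormf : ∀ (k : Fin ℓ → ℤ) (θ : Fin ℓ → ℝ),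
      ‖f k θ‖ = ‖ηhat k‖ * (2 * Real.pi * |dotP k ω|)⁻¹ := by
    intro k θ
    rw [hfdef, phiFlowTerm_eq, norm_mul, norm_mul, norm_inv,
      abs_aA_mul, abs_exp_aA, mul_one]
  -- the summable majorant
  set uu : (Fin ℓ → ℤ) → ℝ := fun k =>
    M * ν * (2 * Real.pi)⁻¹ * (if k = 0 then 0 else KKs k ^ τ * Real.exp (-δ * KKs k))
    with huudef
  set uu' : (Fin ℓ → ℤ) → ℝ := fun k =>
    M * ν * (if k = 0 then 0 else KKs k ^ (τ + 1) * Real.exp (-δ * KKs k)) with huu'def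
  have hu : Summable uu := (auxSummableMaster ℓ τ δ hδ).mul_left _
  have hu' : Summable uu' := (auxSummableMaster ℓ (τ + 1) δ hδ).mul_left _
  have hbound : ∀ (k : Fin ℓ → ℤ) (θ : Fin ℓ → ℝ), ‖f k θ‖ ≤ uu k := by
    intro k θ
    by_cases hk : k = 0
    · rw [hnormf, hk, hη0]
      simp [huudef]
    · rw [hnormf, huudef]
      simp only [if_neg hk]
      have h4 := (hdle k hk).1
      have hd : ‖ηhat k‖ ≤ M * Real.exp (-δ * KKs k) := hdecay k
      rw [mul_inv]
      calc ‖ηhat k‖ * ((2 * Real.pi)⁻¹ * |dotP k ω|⁻¹)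
          ≤ (M * Real.exp (-δ * KKs k)) * ((2 * Real.pi)⁻¹ * (ν * KKs k ^ τ)) := by
            apply mul_le_mul hd (mul_le_mul_of_nonneg_left h4 (by positivity))
              (by positivity) (by positivity)
        _ = M * ν * (2 * Real.pi)⁻¹ * (KKs k ^ τ * Real.exp (-δ * KKs k)) := by ring
  -- the derivative of each term
  set f' : (Fin ℓ → ℤ) → (Fin ℓ → ℝ) → ((Fin ℓ → ℝ) →L[ℝ] ℂ) :=
    fun k θ => (f k θ * aA) • LL k with hf'def
  have hderiv : ∀ (k : Fin ℓ → ℤ) (θ : Fin ℓ → ℝ), HasFDerivAt (f k) (f' k θ) θ :=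
    fun k θ => hasFDerivAt_term (ηhat k * (aA * ((dotP k ω : ℝ) : ℂ))⁻¹) k θ
  have hbound' : ∀ (k : Fin ℓ → ℤ) (θ : Fin ℓ → ℝ), ‖f' k θ‖ ≤ uu' k := by
    intro k θ
    rw [hf'def]
    by_cases hk : k = 0
    · subst hk
      have h0 : f 0 θ = 0 := by simp [hfdef, phiFlowTerm, hη0]
      calc ‖(f 0 θ * aA) • LL (0 : Fin ℓ → ℤ)‖
          ≤ ‖f 0 θ * aA‖ * ‖LL (0 : Fin ℓ → ℤ)‖ := ContinuousLinearMap.opNorm_smul_le _ _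
        _ = 0 := by rw [h0]; simp
        _ ≤ uu' 0 := by simp [huu'def]
    · have hKne : KKs k ≠ 0 := (hKpos k hk).ne'
      calc ‖(f k θ * aA) • LL k‖ ≤ ‖f k θ * aA‖ * ‖LL k‖ :=
            ContinuousLinearMap.opNorm_smul_le _ _
        _ = ‖f k θ‖ * ‖aA‖ * ‖LL k‖ := by rw [norm_mul]
        _ ≤ uu k * (2 * Real.pi) * KKs k := by
            apply mul_le_mul (by rw [norm_aA]; exact
              mul_le_mul_of_nonneg_right (hbound k θ) hπ.le) (norm_LL_le k)
              (norm_nonneg _)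
              (mul_nonneg ((norm_nonneg (f k θ)).trans (hbound k θ)) hπ.le)
        _ ≤ uu' k := by
            rw [huudef, huu'def]
            simp only [if_neg hk]
            rw [Real.rpow_add_one hKne]
            field_simp
            ring_nf
            exact le_refl _
  -- summability statements
  have hsumnorm : ∀ θ : Fin ℓ → ℝ, Summable fun k : Fin ℓ → ℤ => ‖f k θ‖ :=
    fun θ => Summable.of_nonneg_of_le (fun k => norm_nonneg _) (fun k => hbound k θ) hu
  have hsum : ∀ θ : Fin ℓ → ℝ, Summable fun k : Fin ℓ → ℤ => f k θ :=
    fun θ => (hsumnorm θ).of_norm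
  -- derivative of the sum
  have hF : ∀ θ : Fin ℓ → ℝ,
      HasFDerivAt (fun θ => ∑' k, f k θ) (∑' k, f' k θ) θ :=
    fun θ => hasFDerivAt_tsum hu' hderiv hbound' (hsum 0) θ
  refine ⟨fun θ => ∑' k, f k θ, hsumnorm, fun θ => (hsum θ).hasSum, ?_, ?_, ?_, ?_⟩
  · exact tendstoUniformly_tsum hu hbound
  · rw [contDiff_one_iff_fderiv]
    refine ⟨fun θ => (hF θ).differentiableAt, ?_⟩
    have heq : (fderiv ℝ fun θ => ∑' k, f k θ) = fun θ => ∑' k, f' k θ :=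
      funext fun θ => (hF θ).fderiv
    rw [heq]
    refine continuous_tsum ?_ hu' (fun k θ => hbound' k θ)
    intro k
    rw [hf'def]
    show Continuous fun θ => (f k θ * aA) • LL k
    refine Continuous.smul (f := fun θ => f k θ * aA) ?_ continuous_const
    have : Continuous (f k) := by
      rw [hfdef]
      exact continuous_term (ηhat k * (aA * ((dotP k ω : ℝ) : ℂ))⁻¹) k
    exact this.mul continuous_const
  · intro θ e
    exact tsum_congr fun k => term_periodic ℓ ηhat ω k θ e
  · intro θ
    rw [(hF θ).fderiv]
    have hsML : Summable fun k => f' k θ :=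
      Summable.of_norm_bounded hu' (fun k => hbound' k θ)
    have h1 : HasSum (fun k => f' k θ ω) ((∑' k, f' k θ) ω) := by
      have := hsML.hasSum.mapL (ContinuousLinearMap.apply ℝ ℂ ω)
      simpa using this
    have h2 : (fun k => f' k θ ω) =
        fun k => ηhat k * Complex.exp (aA * ((dotP k θ : ℝ) : ℂ)) := by
      funext k
      rw [hf'def]
      rw [ContinuousLinearMap.smul_apply, LL_apply, smul_eq_mul]
      by_cases hk : k = 0
      · rw [hk, hη0]
        simp [hfdef, phiFlowTerm, hη0]
      · have hdk : ((dotP k ω : ℝ) : ℂ) ≠ 0 := by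
          exact_mod_cast (hdle k hk).2
        rw [hfdef, phiFlowTerm_eq]
        field_simp [aA_ne]
    rw [h2] at h1
    exact h1.unique (hηsum θ)
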